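/- Let f : X → Y be a continuous closed map such that f⁻¹(y) is sequentially compact for every y ∈ Y. If Y is first-countable, then X is a strict q-space. -/

import Mathlib

open Filter Topology Set

/-- Auxiliary: for a closed map with sequentially compact fibers, a sequence whose
image converges to `y` has a cluster point in the fiber over `y`. -/
theorem aux_cluster {X Y : Type*} [TopologicalSpace X] [TopologicalSpace Y]
    (f : X → Y) (hclosed : IsClosedMap f)
    (hfib : ∀ y : Y, IsSeqCompact (f ⁻¹' {y}))
    (y : Y) (u : ℕ → X) (hu : Tendsto (f ∘ u) atTop (𝓝 y)) :
    ∃ p : X, MapClusterPt p atTop u := by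
  -- for each k, find a fiber point in the closure of the tail
  have key : ∀ k : ℕ, ∃ p, p ∈ closure (u '' Ici k) ∧ f p = y := by
    intro k
    have hcl : IsClosed (f '' closure (u '' Ici k)) := hclosed _ isClosed_closure
    have hy : y ∈ f '' closure (u '' Ici k) := by
      have hmem : y ∈ closure (f '' (u '' Ici k)) := by
        rw [mem_closure_iff_nhds]
        intro t ht
        obtain ⟨n, hn, hnk⟩ := ((hu.eventually ht).and (eventually_ge_atTop k)).exists
        exact ⟨f (u n), hn, ⟨u n, ⟨n, hnk, rfl⟩, rfl⟩⟩
      exact hcl.closure_subset_iff.mpr (image_mono subset_closure) hmem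
    obtain ⟨p, hp, hpy⟩ := hy
    exact ⟨p, hp, hpy⟩
  choose p hp hpy using key
  have hpfib : ∀ k, p k ∈ f ⁻¹' {y} := fun k => hpy k
  obtain ⟨q, hq, φ, hφ, hconv⟩ := hfib y hpfib
  refine ⟨q, mapClusterPt_iff_frequently.mpr fun s hs => ?_⟩
  obtain ⟨W, hWs, hW, hqW⟩ := mem_nhds_iff.mp hs
  rw [frequently_atTop]
  intro N
  obtain ⟨j, hjW, hjN⟩ := ((hconv.eventually (hW.mem_nhds hqW)).and
    (eventually_ge_atTop N)).exists
  -- p (φ j) ∈ closure (u '' Ici (φ j)) and W is an open nbhd of p (φ j)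
  have hφj : N ≤ φ j := hjN.trans (hφ.id_le j)
  have := mem_closure_iff.mp (hp (φ j)) W hW hjW
  obtain ⟨z, hzW, m, hm, rfl⟩ := this
  exact ⟨m, hφj.trans hm, hWs hzW⟩

/-- if `f : X → Y` is continuous and closed with sequentially compact
fibers and `Y` is first-countable, then `X` is a strict q-space. -/
theorem stmt_14 {X Y : Type*} [TopologicalSpace X] [TopologicalSpace Y]
    (f : X → Y) (hf : Continuous f) (hclosed : IsClosedMap f)
    (hfib : ∀ y : Y, IsSeqCompact (f ⁻¹' {y}))
    [FirstCountableTopology Y] :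
    ∀ x : X, ∃ U : ℕ → Set X, (∀ n, IsOpen (U n) ∧ x ∈ U n) ∧
      (∀ u : ℕ → X, (∀ n, u n ∈ U n) → ∃ p : X, MapClusterPt p atTop u) ∧
      IsSeqCompact (⋂ n, U n) := by
  intro x
  set y := f x with hy
  obtain ⟨V, hV⟩ := (𝓝 y).exists_antitone_basis
  refine ⟨fun n => f ⁻¹' interior (V n), ?_, ?_, ?_⟩
  · intro n
    exact ⟨isOpen_interior.preimage hf,
      mem_preimage.mpr (mem_interior_iff_mem_nhds.mpr (hV.mem n))⟩
  · intro u hu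
    apply aux_cluster f hclosed hfib y
    -- f ∘ u → y since f (u n) ∈ V n and V is an antitone basis
    rw [hV.toHasBasis.tendsto_right_iff]
    intro i _
    filter_upwards [eventually_ge_atTop i] with n hn
    exact hV.antitone hn (interior_subset (hu n))
  · intro u hu
    -- each u k is in every basic nbhd of y, so y ∈ closure {f (u k)}
    have hwk : ∀ k : ℕ, ∃ w, w ∈ closure {u k} ∧ f w = y := by
      intro k
      have hy' : y ∈ closure ({f (u k)} : Set Y) := by
        rw [mem_closure_iff_nhds]
        intro t ht
        obtain ⟨i, _, hi⟩ := hV.toHasBasis.mem_iff.mp ht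
        exact ⟨f (u k), hi (interior_subset (by exact mem_iInter.mp (hu k) i)), rfl⟩
      have hcl : IsClosed (f '' closure ({u k} : Set X)) := hclosed _ isClosed_closure
      have : closure ({f (u k)} : Set Y) ⊆ f '' closure {u k} := by
        apply hcl.closure_subset_iff.mpr
        rintro z rfl
        exact ⟨u k, subset_closure rfl, rfl⟩
      obtain ⟨w, hw, hwy⟩ := this hy'
      exact ⟨w, hw, hwy⟩
    choose w hw hwy using hwk
    obtain ⟨q, hq, φ, hφ, hconv⟩ := hfib y (fun k => (hwy k : w k ∈ f ⁻¹' {y}))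
    refine ⟨q, ?_, φ, hφ, ?_⟩
    · refine mem_iInter.mpr fun n => ?_
      have : f q = y := hq
      simpa [this] using mem_interior_iff_mem_nhds.mpr (hV.mem n)
    · -- u ∘ φ → q : any open set containing w k also contains u k
      rw [tendsto_nhds]
      intro W hW hqW
      filter_upwards [hconv.eventually (hW.mem_nhds hqW)] with j hj
      have := mem_closure_iff.mp (hw (φ j)) W hW hj
      obtain ⟨z, hzW, hz⟩ := this
      rwa [mem_singleton_iff.mp hz] at hzW
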